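/- For every k ≥ 1 and n ≥ 1, the k-th complete shifted symmetric polynomial h*_k(x₁,…,x_n) = ∑_{1 ≤ i₁ ≤ i₂ ≤ ⋯ ≤ i_k ≤ n} (x_{i₁} − k + 1)(x_{i₂} − k + 2) ⋯ (x_{i_k}) is shifted symmetric, i.e., invariant under replacing (x_i, x_{i+1}) by (x_{i+1} − 1, x_i + 1) for each 1 ≤ i ≤ n − 1. -/

import Mathlib

open scoped Classical


/- ### algebraic part -/

def asc (y : ℂ) : ℕ → ℂ
  | 0 => 1
  | m+1 => asc y m * (y + m)

lemma asc_succ (y : ℂ) (m : ℕ) : asc y (m+1) = asc y m * (y + m) := rfl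

def gg (U V : ℂ) : ℕ → ℂ
  | 0 => 1
  | m+1 => asc U (m+1) + (V + m) * gg U V m

lemma gg_tele (U V : ℂ) (m : ℕ) :
    (U - V + 1) * gg U V m = asc U (m+1) - asc (V-1) (m+1) := by
  induction m with
  | zero => simp [gg, asc]; ring
  | succ m ih =>
    rw [gg, asc_succ U (m+1), asc_succ (V-1) (m+1)]
    push_cast
    linear_combination (V + (m:ℂ)) * ih

lemma gg_swap (U V : ℂ) (m : ℕ) : gg U V m = gg (V-1) (U+1) m := by
  induction m with
  | zero => rfl
  | succ m ih =>
    have t := gg_tele U V m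
    rw [gg, gg, ← ih]
    linear_combination -t

lemma gg_eq_sum (U V : ℂ) (m : ℕ) :
    gg U V m = ∑ a ∈ Finset.range (m+1), asc U a * asc (V + a) (m - a) := by
  induction m with
  | zero => simp [gg, asc]
  | succ m ih =>
    rw [Finset.sum_range_succ, gg, ih, Finset.mul_sum]
    have key : ∀ a ∈ Finset.range (m+1),
        (V + m) * (asc U a * asc (V + a) (m - a)) = asc U a * asc (V + a) (m + 1 - a) := by
      intro a ha
      simp only [Finset.mem_range] at ha
      have hle : a ≤ m := Nat.lt_succ_iff.mp ha
      have e1 : m + 1 - a = (m - a) + 1 := by omega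
      rw [e1, asc_succ]
      have e2 : ((m - a : ℕ) : ℂ) = (m : ℂ) - a := by
        push_cast [Nat.cast_sub hle]; ring
      rw [e2]; ring
    rw [Finset.sum_congr rfl key]
    simp [asc]
    ring

/- ### combinatorial helpers -/

lemma downclosed_iff {k : ℕ} (S : Finset (Fin k))
    (hS : ∀ s t : Fin k, t ≤ s → s ∈ S → t ∈ S) (t : Fin k) :
    t ∈ S ↔ (t : ℕ) < S.card := by
  constructor
  · intro ht
    have hsub : Finset.Iic t ⊆ S := fun s hs => hS t s (Finset.mem_Iic.mp hs) ht
    have := Finset.card_le_card hsub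
    rw [Fin.card_Iic] at this
    omega
  · intro hlt
    by_contra hnt
    have hsub : S ⊆ Finset.Iio t := by
      intro s hs
      rw [Finset.mem_Iio]
      by_contra hge
      exact hnt (hS s t (le_of_not_gt hge) hs)
    have := Finset.card_le_card hsub
    rw [Fin.card_Iio] at this
    omega

lemma card_filter_interval (k p q : ℕ) (hq : q ≤ k) :
    (Finset.univ.filter (fun t : Fin k => p ≤ (t:ℕ) ∧ (t:ℕ) < q)).card = q - p := by
  have h : ∀ m ∈ Finset.Ico p q, m < k := fun m hm => by
    simp only [Finset.mem_Ico] at hm; omega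
  have e : Finset.univ.filter (fun t : Fin k => p ≤ (t:ℕ) ∧ (t:ℕ) < q)
      = Finset.attachFin (Finset.Ico p q) h := by
    ext t
    simp [Finset.mem_attachFin, Finset.mem_Ico]
  rw [e, Finset.card_attachFin, Nat.card_Ico]

lemma prod_interval_asc (k : ℕ) (c : ℂ) (p a : ℕ) (h : p + a ≤ k) :
    ∏ t ∈ Finset.univ.filter (fun t : Fin k => p ≤ (t:ℕ) ∧ (t:ℕ) < p + a),
      (c + ((t:ℕ):ℂ)) = asc (c + p) a := by
  induction a with
  | zero =>
    have e : Finset.univ.filter (fun t : Fin k => p ≤ (t:ℕ) ∧ (t:ℕ) < p + 0) = ∅ := by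
      ext t; simp
    rw [e, Finset.prod_empty]; rfl
  | succ a ih =>
    have hk : p + a < k := by omega
    have e : Finset.univ.filter (fun t : Fin k => p ≤ (t:ℕ) ∧ (t:ℕ) < p + (a+1))
        = insert ⟨p+a, hk⟩ (Finset.univ.filter (fun t : Fin k => p ≤ (t:ℕ) ∧ (t:ℕ) < p + a)) := by
      ext t
      simp [Fin.ext_iff]
      omega
    rw [e, Finset.prod_insert (by simp)]
    rw [ih (by omega), asc_succ]
    push_cast
    ring

/- ### the collapse map and the fibers -/

def collapse {n : ℕ} (I J : Fin n) : Fin n → Fin n := fun j => if j = J then I else j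

def raiseFn {n k : ℕ} (f₀ : Fin k → Fin n) (I J : Fin n) (p a : ℕ) : Fin k → Fin n :=
  fun t => if f₀ t = I ∧ p + a ≤ (t:ℕ) then J else f₀ t

lemma collapse_monotone {n : ℕ} (I J : Fin n) (hIJ : (J:ℕ) = (I:ℕ) + 1) :
    Monotone (collapse I J) := by
  intro a b hab
  unfold collapse
  rw [Fin.le_def] at hab ⊢
  by_cases ha : a = J <;> by_cases hb : b = J <;>
    simp only [ha, hb, if_pos, if_neg, if_true, if_false] <;>
    first
      | omega
      | (rw [if_neg hb]; subst ha; rw [Fin.ext_iff] at hb; omega)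
      | (rw [if_neg ha]; subst hb; rw [Fin.ext_iff] at ha; omega)
      | (rw [if_neg ha, if_neg hb]; omega)

lemma collapse_ne {n : ℕ} (I J : Fin n) (hIJ : (J:ℕ) = (I:ℕ) + 1) (j : Fin n) :
    collapse I J j ≠ J := by
  unfold collapse
  by_cases hj : j = J
  · rw [if_pos hj]
    intro e; rw [Fin.ext_iff] at e; omega
  · rw [if_neg hj]; exact hj

/- ### the main fiber computation -/

lemma fiber_eval {n k : ℕ} (y : Fin n → ℂ) (I J : Fin n) (hIJ : (J:ℕ) = (I:ℕ) + 1)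
    (f₀ : Fin k → Fin n) (hmono : Monotone f₀) (hnoJ : ∀ t, f₀ t ≠ J) :
    (∑ f ∈ Finset.univ.filter (fun f : Fin k → Fin n => collapse I J ∘ f = f₀),
      (if Monotone f then ∏ t : Fin k, (y (f t) - ((k:ℂ) - 1 - ((t:ℕ):ℂ))) else 0))
    = (∏ t ∈ Finset.univ.filter (fun t : Fin k => f₀ t ≠ I),
        (y (f₀ t) - ((k:ℂ) - 1 - ((t:ℕ):ℂ))))
      * gg (y I - ((k:ℂ) - 1) + ((Finset.univ.filter (fun t : Fin k => f₀ t < I)).card : ℂ))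
           (y J - ((k:ℂ) - 1) + ((Finset.univ.filter (fun t : Fin k => f₀ t < I)).card : ℂ))
           ((Finset.univ.filter (fun t : Fin k => f₀ t = I)).card) := by
  have hIne : I ≠ J := by intro e; rw [e] at hIJ; omega
  set p := (Finset.univ.filter (fun t : Fin k => f₀ t < I)).card with hp
  set m := (Finset.univ.filter (fun t : Fin k => f₀ t = I)).card with hm
  -- basic characterizations
  have hA : ∀ t : Fin k, f₀ t < I ↔ (t:ℕ) < p := by
    intro t
    have := downclosed_iff (Finset.univ.filter (fun t : Fin k => f₀ t < I))
      (fun s t hts hs => by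
        simp only [Finset.mem_filter, Finset.mem_univ, true_and] at *
        exact lt_of_le_of_lt (hmono hts) hs) t
    simpa using this
  have hcard_le : (Finset.univ.filter (fun t : Fin k => f₀ t ≤ I)).card = p + m := by
    have e : Finset.univ.filter (fun t : Fin k => f₀ t ≤ I)
        = Finset.univ.filter (fun t : Fin k => f₀ t < I)
          ∪ Finset.univ.filter (fun t : Fin k => f₀ t = I) := by
      ext t
      simp only [Finset.mem_filter, Finset.mem_union, Finset.mem_univ, true_and]
      exact le_iff_lt_or_eq
    rw [e, Finset.card_union_of_disjoint]
    rw [Finset.disjoint_filter]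
    intro t _ hlt heq
    exact absurd heq (ne_of_lt hlt)
  have hB : ∀ t : Fin k, f₀ t ≤ I ↔ (t:ℕ) < p + m := by
    intro t
    have := downclosed_iff (Finset.univ.filter (fun t : Fin k => f₀ t ≤ I))
      (fun s t hts hs => by
        simp only [Finset.mem_filter, Finset.mem_univ, true_and] at *
        exact le_trans (hmono hts) hs) t
    rw [hcard_le] at this
    simpa using this
  have hC : ∀ t : Fin k, f₀ t = I ↔ (p ≤ (t:ℕ) ∧ (t:ℕ) < p + m) := by
    intro t
    constructor
    · intro e
      refine ⟨?_, (hB t).mp (le_of_eq e)⟩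
      have : ¬ f₀ t < I := by rw [e]; exact lt_irrefl I
      rw [hA t] at this; omega
    · rintro ⟨h1, h2⟩
      have hle : f₀ t ≤ I := (hB t).mpr h2
      have hnlt : ¬ f₀ t < I := by rw [hA t]; omega
      exact le_antisymm hle (le_of_not_gt hnlt)
  have hpmk : p + m ≤ k := by
    have := Finset.card_filter_le Finset.univ (fun t : Fin k => f₀ t ≤ I)
    rw [hcard_le] at this
    simpa using this
  have hleft : ∀ f : Fin k → Fin n, collapse I J ∘ f = f₀ → Monotone f →
      raiseFn f₀ I J p ((Finset.univ.filter (fun t : Fin k => f t = I)).card) = f := by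
    intro f hcf hmf
    -- pointwise facts
    have hfI : ∀ t, f t = I → f₀ t = I := by
      intro t ht
      have := congrFun hcf t
      simp only [Function.comp_apply, collapse, ht, if_neg hIne] at this
      exact this.symm ▸ rfl
    have hout : ∀ t, f₀ t ≠ I → f t = f₀ t := by
      intro t ht
      have hc := congrFun hcf t
      simp only [Function.comp_apply, collapse] at hc
      by_cases hfj : f t = J
      · rw [if_pos hfj] at hc; exact absurd hc.symm ht
      · rwa [if_neg hfj] at hc
    have hblk : ∀ t, f₀ t = I → f t = I ∨ f t = J := by
      intro t ht
      have hc := congrFun hcf t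
      simp only [Function.comp_apply, collapse] at hc
      by_cases hfj : f t = J
      · exact Or.inr hfj
      · rw [if_neg hfj] at hc; exact Or.inl (hc.trans ht)
    set af := (Finset.univ.filter (fun t : Fin k => f t = I)).card with haf
    have hcardf : (Finset.univ.filter (fun t : Fin k => f t ≤ I)).card = p + af := by
      have e : Finset.univ.filter (fun t : Fin k => f t ≤ I)
          = Finset.univ.filter (fun t : Fin k => f₀ t < I)
            ∪ Finset.univ.filter (fun t : Fin k => f t = I) := by
        ext t
        simp only [Finset.mem_filter, Finset.mem_union, Finset.mem_univ, true_and]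
        constructor
        · intro hft
          rcases lt_trichotomy (f₀ t) I with h1 | h1 | h1
          · exact Or.inl h1
          · rcases hblk t h1 with h2 | h2
            · exact Or.inr h2
            · exfalso
              rw [h2, Fin.le_def] at hft
              omega
          · exfalso
            have := hout t (ne_of_gt h1)
            rw [this] at hft
            exact absurd hft (not_le_of_gt h1)
        · rintro (h1 | h1)
          · rw [hout t (ne_of_lt h1)]; exact le_of_lt h1
          · exact le_of_eq h1
      rw [e, Finset.card_union_of_disjoint]
      rw [Finset.disjoint_filter]
      intro t _ hlt heq
      have := hfI t heq
      rw [this] at hlt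
      exact lt_irrefl I hlt
    have hfle : ∀ t : Fin k, f t ≤ I ↔ (t:ℕ) < p + af := by
      intro t
      have := downclosed_iff (Finset.univ.filter (fun t : Fin k => f t ≤ I))
        (fun s t hts hs => by
          simp only [Finset.mem_filter, Finset.mem_univ, true_and] at *
          exact le_trans (hmf hts) hs) t
      rw [hcardf] at this
      simpa using this
    funext t
    simp only [raiseFn]
    by_cases hti : f₀ t = I
    · by_cases hge : p + af ≤ (t:ℕ)
      · rw [if_pos ⟨hti, hge⟩]
        rcases hblk t hti with h2 | h2
        · exfalso
          have : f t ≤ I := le_of_eq h2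
          rw [hfle t] at this
          omega
        · exact h2.symm
      · rw [if_neg (by intro hc; exact hge hc.2)]
        have : f t ≤ I := by rw [hfle t]; omega
        rcases hblk t hti with h2 | h2
        · rw [h2, hti]
        · exfalso
          rw [h2, Fin.le_def] at this
          omega
    · rw [if_neg (by intro hc; exact hti hc.1)]
      exact (hout t hti).symm
  -- step 1: rewrite the sum with ite as a sum over the filtered set
  rw [← Finset.sum_filter, Finset.filter_filter]
  -- step 2: bijection with range (m+1)
  rw [Finset.sum_nbij' (i := fun f => (Finset.univ.filter (fun t : Fin k => f t = I)).card)
    (j := fun a => raiseFn f₀ I J p a)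
    (t := Finset.range (m+1))
    (g := fun a => ∏ t : Fin k, (y (raiseFn f₀ I J p a t) - ((k:ℂ) - 1 - ((t:ℕ):ℂ))))
    ?hi ?hj ?left ?right ?val]
  case hi =>
    intro f hf
    simp only [Finset.mem_filter, Finset.mem_univ, true_and] at hf
    obtain ⟨hcf, hmf⟩ := hf
    rw [Finset.mem_range, Nat.lt_succ_iff, hm]
    apply Finset.card_le_card
    intro t ht
    simp only [Finset.mem_filter, Finset.mem_univ, true_and] at *
    have := congrFun hcf t
    simp only [Function.comp_apply, collapse, ht, if_neg hIne] at this
    exact this.symm ▸ rfl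
  case hj =>
    intro a ha
    rw [Finset.mem_range, Nat.lt_succ_iff] at ha
    simp only [Finset.mem_filter, Finset.mem_univ, true_and]
    constructor
    · funext t
      simp only [Function.comp_apply, raiseFn, collapse]
      by_cases hc : f₀ t = I ∧ p + a ≤ (t:ℕ)
      · simp [hc]
      · simp [if_neg hc, hnoJ t]
    · intro s t hst
      simp only [raiseFn]
      by_cases hcs : f₀ s = I ∧ p + a ≤ (s:ℕ) <;> by_cases hct : f₀ t = I ∧ p + a ≤ (t:ℕ)
      · rw [if_pos hcs, if_pos hct]
      · rw [if_pos hcs, if_neg hct]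
        have hst' : (s:ℕ) ≤ (t:ℕ) := hst
        have htI : f₀ t ≠ I := by
          intro e
          exact hct ⟨e, by omega⟩
        have hle : I ≤ f₀ t := le_trans (le_of_eq hcs.1.symm) (hmono hst)
        have : I < f₀ t := lt_of_le_of_ne hle (Ne.symm htI)
        rw [Fin.le_def]
        rw [Fin.lt_def] at this
        omega
      · rw [if_neg hcs, if_pos hct]
        have : f₀ s ≤ f₀ t := hmono hst
        rw [Fin.le_def] at this ⊢
        rw [Fin.ext_iff] at hct
        omega
      · rw [if_neg hcs, if_neg hct]
        exact hmono hst
  case left =>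
    intro f hf
    simp only [Finset.mem_filter, Finset.mem_univ, true_and] at hf
    exact hleft f hf.1 hf.2
  case right =>
    intro a ha
    rw [Finset.mem_range, Nat.lt_succ_iff] at ha
    have e : Finset.univ.filter (fun t : Fin k => raiseFn f₀ I J p a t = I)
        = Finset.univ.filter (fun t : Fin k => p ≤ (t:ℕ) ∧ (t:ℕ) < p + a) := by
      ext t
      simp only [Finset.mem_filter, Finset.mem_univ, true_and]; simp only [raiseFn]
      by_cases hc : f₀ t = I ∧ p + a ≤ (t:ℕ)
      · rw [if_pos hc]
        constructor
        · intro e; exact absurd e.symm hIne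
        · intro e; exfalso; omega
      · rw [if_neg hc]
        rw [hC t]
        constructor
        · intro e
          have : ¬ (p + a ≤ (t:ℕ)) := fun hh => hc ⟨(hC t).mpr e, hh⟩
          omega
        · intro e
          constructor <;> omega
    show (Finset.univ.filter (fun t : Fin k => raiseFn f₀ I J p a t = I)).card = a
    rw [e, card_filter_interval k p (p+a) (by omega)]
    omega
  case val =>
    intro f hf
    simp only [Finset.mem_filter, Finset.mem_univ, true_and] at hf
    have e := hleft f hf.1 hf.2
    show (∏ t : Fin k, (y (f t) - ((k:ℂ) - 1 - ((t:ℕ):ℂ))))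
      = ∏ t : Fin k, (y (raiseFn f₀ I J p
          ((Finset.univ.filter (fun t : Fin k => f t = I)).card) t) - ((k:ℂ) - 1 - ((t:ℕ):ℂ)))
    rw [e]
  -- step 3: evaluate the sum over `range (m+1)`
  rw [gg_eq_sum, Finset.mul_sum]
  apply Finset.sum_congr rfl
  intro a ha
  rw [Finset.mem_range, Nat.lt_succ_iff] at ha
  rw [← Finset.prod_filter_mul_prod_filter_not Finset.univ (fun t : Fin k => f₀ t = I)
      (fun t : Fin k => (y (raiseFn f₀ I J p a t) - ((k:ℂ) - 1 - ((t:ℕ):ℂ))))]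
  rw [← Finset.prod_filter_mul_prod_filter_not
      (Finset.univ.filter (fun t : Fin k => f₀ t = I)) (fun t : Fin k => (t:ℕ) < p + a)
      (fun t : Fin k => (y (raiseFn f₀ I J p a t) - ((k:ℂ) - 1 - ((t:ℕ):ℂ))))]
  rw [Finset.filter_filter, Finset.filter_filter]
  -- identify the three pieces
  have eI : Finset.univ.filter (fun t : Fin k => f₀ t = I ∧ (t:ℕ) < p + a)
      = Finset.univ.filter (fun t : Fin k => p ≤ (t:ℕ) ∧ (t:ℕ) < p + a) := by
    ext t
    simp only [Finset.mem_filter, Finset.mem_univ, true_and, hC t]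
    omega
  have eJ : Finset.univ.filter (fun t : Fin k => f₀ t = I ∧ ¬ (t:ℕ) < p + a)
      = Finset.univ.filter (fun t : Fin k => p + a ≤ (t:ℕ) ∧ (t:ℕ) < (p + a) + (m - a)) := by
    ext t
    simp only [Finset.mem_filter, Finset.mem_univ, true_and, hC t]
    omega
  have hvI : ∏ t ∈ Finset.univ.filter (fun t : Fin k => f₀ t = I ∧ (t:ℕ) < p + a),
      (y (raiseFn f₀ I J p a t) - ((k:ℂ) - 1 - ((t:ℕ):ℂ)))
      = asc (y I - ((k:ℂ) - 1) + (p:ℂ)) a := by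
    rw [← prod_interval_asc k (y I - ((k:ℂ) - 1)) p a (by omega), ← eI]
    apply Finset.prod_congr rfl
    intro t ht
    simp only [Finset.mem_filter, Finset.mem_univ, true_and] at ht
    have : raiseFn f₀ I J p a t = I := by
      simp only [raiseFn]
      rw [if_neg (by intro hc; omega)]
      exact ht.1
    rw [this]
    ring
  have hvJ : ∏ t ∈ Finset.univ.filter (fun t : Fin k => f₀ t = I ∧ ¬ (t:ℕ) < p + a),
      (y (raiseFn f₀ I J p a t) - ((k:ℂ) - 1 - ((t:ℕ):ℂ)))
      = asc ((y J - ((k:ℂ) - 1) + (p:ℂ)) + (a:ℂ)) (m - a) := by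
    have harg : (y J - ((k:ℂ) - 1)) + ((p + a : ℕ):ℂ) = (y J - ((k:ℂ) - 1) + (p:ℂ)) + (a:ℂ) := by
      push_cast; ring
    rw [← harg, ← prod_interval_asc k (y J - ((k:ℂ) - 1)) (p + a) (m - a) (by omega), ← eJ]
    apply Finset.prod_congr rfl
    intro t ht
    simp only [Finset.mem_filter, Finset.mem_univ, true_and] at ht
    have : raiseFn f₀ I J p a t = J := by
      simp only [raiseFn]
      rw [if_pos ⟨ht.1, by omega⟩]
    rw [this]
    ring
  have hvOut : ∏ t ∈ Finset.univ.filter (fun t : Fin k => ¬ f₀ t = I),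
      (y (raiseFn f₀ I J p a t) - ((k:ℂ) - 1 - ((t:ℕ):ℂ)))
      = ∏ t ∈ Finset.univ.filter (fun t : Fin k => f₀ t ≠ I),
        (y (f₀ t) - ((k:ℂ) - 1 - ((t:ℕ):ℂ))) := by
    apply Finset.prod_congr rfl
    intro t ht
    simp only [Finset.mem_filter, Finset.mem_univ, true_and] at ht
    have : raiseFn f₀ I J p a t = f₀ t := by
      simp only [raiseFn]
      rw [if_neg (by intro hc; exact ht hc.1)]
    rw [this]
  rw [hvI, hvJ, hvOut]
  ring

/-- The `k`-th complete shifted symmetric polynomial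
`h*_k(x₁,…,xₙ) = ∑_{i₁≤⋯≤i_k} (x_{i₁}−k+1)(x_{i₂}−k+2)⋯(x_{i_k})`. -/
noncomputable def hstar (n k : ℕ) (x : Fin n → ℂ) : ℂ :=
  ∑ i : Fin k → Fin n, if Monotone i then
    ∏ t : Fin k, (x (i t) - ((k : ℂ) - 1 - ((t : ℕ) : ℂ))) else 0

/-- `h*_k` is shifted symmetric: it is invariant under replacing `(x_i, x_{i+1})` by
`(x_{i+1} − 1, x_i + 1)`. -/
theorem stmt3 (n k : ℕ) (hk1 : 1 ≤ k) (hn : 1 ≤ n) (x : Fin n → ℂ)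
    (i : Fin n) (h : (i : ℕ) + 1 < n) :
    hstar n k x = hstar n k (fun j =>
      if j = i then x ⟨(i : ℕ) + 1, h⟩ - 1
      else if j = ⟨(i : ℕ) + 1, h⟩ then x i + 1
      else x j) := by
  set J : Fin n := ⟨(i : ℕ) + 1, h⟩ with hJ
  set x' : Fin n → ℂ := fun j =>
      if j = i then x J - 1 else if j = J then x i + 1 else x j with hx'
  have hIJ : (J:ℕ) = (i:ℕ) + 1 := rfl
  have hJne : J ≠ i := by simp [Fin.ext_iff, hIJ]
  have hx'i : x' i = x J - 1 := by rw [hx']; simp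
  have hx'J : x' J = x i + 1 := by rw [hx']; simp [hJne]
  have hx'out : ∀ j : Fin n, j ≠ i → j ≠ J → x' j = x j := by
    intro j h1 h2
    rw [hx']
    simp [h1, h2]
  have expand : ∀ y : Fin n → ℂ, hstar n k y
      = ∑ f₀ : Fin k → Fin n,
          ∑ f ∈ Finset.univ.filter (fun f : Fin k → Fin n => collapse i J ∘ f = f₀),
            (if Monotone f then ∏ t : Fin k, (y (f t) - ((k:ℂ) - 1 - ((t:ℕ):ℂ))) else 0) := by
    intro y
    unfold hstar
    exact (Finset.sum_fiberwise Finset.univ (fun f : Fin k → Fin n => collapse i J ∘ f) _).symm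
  rw [expand x, expand x']
  apply Finset.sum_congr rfl
  intro f₀ _
  by_cases hgood : Monotone f₀ ∧ ∀ t, f₀ t ≠ J
  · rw [fiber_eval x i J hIJ f₀ hgood.1 hgood.2, fiber_eval x' i J hIJ f₀ hgood.1 hgood.2]
    have hout : ∏ t ∈ Finset.univ.filter (fun t : Fin k => f₀ t ≠ i),
        (x' (f₀ t) - ((k:ℂ) - 1 - ((t:ℕ):ℂ)))
        = ∏ t ∈ Finset.univ.filter (fun t : Fin k => f₀ t ≠ i),
          (x (f₀ t) - ((k:ℂ) - 1 - ((t:ℕ):ℂ))) := by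
      apply Finset.prod_congr rfl
      intro t ht
      simp only [Finset.mem_filter, Finset.mem_univ, true_and] at ht
      rw [hx'out (f₀ t) ht (hgood.2 t)]
    rw [hout]
    set p := (Finset.univ.filter (fun t : Fin k => f₀ t < i)).card
    set m := (Finset.univ.filter (fun t : Fin k => f₀ t = i)).card
    have e1 : x' i - ((k:ℂ) - 1) + (p:ℂ) = (x J - ((k:ℂ) - 1) + (p:ℂ)) - 1 := by
      rw [hx'i]; ring
    have e2 : x' J - ((k:ℂ) - 1) + (p:ℂ) = (x i - ((k:ℂ) - 1) + (p:ℂ)) + 1 := by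
      rw [hx'J]; ring
    rw [e1, e2, ← gg_swap]
  · have z : ∀ y : Fin n → ℂ,
        ∑ f ∈ Finset.univ.filter (fun f : Fin k → Fin n => collapse i J ∘ f = f₀),
          (if Monotone f then ∏ t : Fin k, (y (f t) - ((k:ℂ) - 1 - ((t:ℕ):ℂ))) else 0) = 0 := by
      intro y
      apply Finset.sum_eq_zero
      intro f hf
      simp only [Finset.mem_filter, Finset.mem_univ, true_and] at hf
      rw [if_neg]
      intro hmf
      apply hgood
      subst hf
      exact ⟨(collapse_monotone i J hIJ).comp hmf, fun t => collapse_ne i J hIJ (f t)⟩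
    rw [z x, z x']
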